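/- For all a ∈ K0 and c ∈ K0, the element s0(d1 a) * c * (s0(d1 a))⁻¹ * c⁻¹ lies in the subgroup ⁅K0, K1⁆ ⊔ ⁅K0, K0⁆ of FreeGroup (X ⊕ Y). Consequently, every element of R = d1(K0) acts trivially on the abelianization of the crossed module C = K0/⁅K0, K1⁆ of the presentation. -/

import Mathlib

/-- The degeneracy `s₀ : F(X) → F(X ⊕ Y)`, sending each generator `x` to `Sum.inl x`. -/
def s0 (X Y : Type*) : FreeGroup X →* FreeGroup (X ⊕ Y) :=
  FreeGroup.lift fun x => FreeGroup.of (Sum.inl x)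

/-- The face map `d₀ : F(X ⊕ Y) → F(X)`, with `d₀ x = x` and `d₀ y = 1`. -/
def d0 (X Y : Type*) : FreeGroup (X ⊕ Y) →* FreeGroup X :=
  FreeGroup.lift (Sum.elim FreeGroup.of fun _ => 1)

/-- The face map `d₁ : F(X ⊕ Y) → F(X)`, with `d₁ x = x` and `d₁ y = r y`. -/
def d1 {X Y : Type*} (r : Y → FreeGroup X) : FreeGroup (X ⊕ Y) →* FreeGroup X :=
  FreeGroup.lift (Sum.elim FreeGroup.of r)

open scoped commutatorElement

/-- For `a, c ∈ K₀ = ker d₀`, the element `s₀(d₁ a) * c * s₀(d₁ a)⁻¹ * c⁻¹` lies in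
`⁅K₀, K₁⁆ ⊔ ⁅K₀, K₀⁆`.  Consequently every element of `R = d₁(K₀)` acts trivially on the
abelianization of the crossed module `C = K₀/⁅K₀, K₁⁆` of the presentation. -/
theorem conj_d1_mul_inv_mem_commutator_sup {X Y : Type*} (r : Y → FreeGroup X)
    (a : FreeGroup (X ⊕ Y)) (ha : a ∈ (d0 X Y).ker)
    (c : FreeGroup (X ⊕ Y)) (hc : c ∈ (d0 X Y).ker) :
    s0 X Y (d1 r a) * c * (s0 X Y (d1 r a))⁻¹ * c⁻¹ ∈
      ⁅(d0 X Y).ker, (d1 r).ker⁆ ⊔ ⁅(d0 X Y).ker, (d0 X Y).ker⁆ := by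
  have hd1s0 : ∀ w : FreeGroup X, d1 r (s0 X Y w) = w := by
    intro w
    have : (d1 r).comp (s0 X Y) = MonoidHom.id (FreeGroup X) := by
      ext x
      simp [d1, s0]
    simpa using congrArg (fun f => f w) this
  set b : FreeGroup (X ⊕ Y) := a⁻¹ * s0 X Y (d1 r a) with hb
  have hbK1 : b ∈ (d1 r).ker := by
    simp [hb, MonoidHom.mem_ker, hd1s0]
  have h1 : a * ⁅b, c⁆ * a⁻¹ ∈ ⁅(d0 X Y).ker, (d1 r).ker⁆ := by
    have hbc : ⁅b, c⁆ ∈ ⁅(d0 X Y).ker, (d1 r).ker⁆ := by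
      have := Subgroup.commutator_mem_commutator hc hbK1
      have hinv : (⁅c, b⁆)⁻¹ = ⁅b, c⁆ := by group
      simpa [hinv] using Subgroup.inv_mem _ this
    haveI : Subgroup.Normal ⁅(d0 X Y).ker, (d1 r).ker⁆ :=
      Subgroup.commutator_normal _ _
    simpa [mul_assoc] using this.conj_mem _ hbc a
  have h2 : ⁅a, c⁆ ∈ ⁅(d0 X Y).ker, (d0 X Y).ker⁆ :=
    Subgroup.commutator_mem_commutator ha hc
  have key : s0 X Y (d1 r a) * c * (s0 X Y (d1 r a))⁻¹ * c⁻¹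
      = (a * ⁅b, c⁆ * a⁻¹) * ⁅a, c⁆ := by
    simp only [hb, commutatorElement_def]
    group
  rw [key]
  exact Subgroup.mul_mem _ (Subgroup.mem_sup_left h1) (Subgroup.mem_sup_right h2)
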